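/- None of the groups ℤ/3ℤ, ℤ/4ℤ, ℤ/5ℤ, ℤ/6ℤ, ℤ/7ℤ, (ℤ/2ℤ)², (ℤ/2ℤ)³, (ℤ/2ℤ)⁴, (ℤ/3ℤ)², the symmetric group S₃, and the quaternion group Q₈ admits a semi-regular poset representation with two orbits. -/

import Mathlib

universe u v

/-- A group `G` admits a semi-regular poset representation with exactly `k` orbits:
there is a partial order `P` and a group isomorphism `ρ` from `G` onto the group of
order automorphisms of `P` such that the induced action is free, and there are `k`
orbit representatives such that every point lies in the orbit of exactly one of them. -/
def HasSemiRegularPosetRep (G : Type u) [Group G] (k : ℕ) : Prop :=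
  ∃ (P : Type v) (_ : PartialOrder P) (ρ : G ≃* (P ≃o P)),
    (∀ (g : G) (p : P), ρ g p = p → g = 1) ∧
    ∃ reps : Fin k → P, ∀ p : P, ∃! i : Fin k, ∃ g : G, ρ g (reps i) = p

/-- A subset `S` of a group `G` is *rigid* if the only "compatible pairs" of bijections
for the associated two-level poset structure are the pairs of left translations. -/
def Rigid (G : Type u) [Group G] (S : Set G) : Prop :=
  ∀ α β : G → G, Function.Bijective α → Function.Bijective β →
    (∀ g h : G, g⁻¹ * h ∈ S ↔ (α g)⁻¹ * β h ∈ S) →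
    ∃ z : G, (∀ g, α g = z * g) ∧ (∀ h, β h = z * h)

section Reduction

variable {G : Type u} [Group G] {P : Type v} [PartialOrder P]

theorem fix_of_le [Finite G] (ρ : G ≃* (P ≃o P)) (k : G) (p : P) (h : p ≤ ρ k p) :
    ρ k p = p := by
  have step : ∀ j : ℕ, p ≤ ρ (k ^ j) p := by
    intro j
    induction j with
    | zero => simp
    | succ j ih =>
      calc p ≤ ρ (k ^ j) p := ih
        _ ≤ ρ (k ^ j) (ρ k p) := (ρ (k ^ j)).monotone h
        _ = ρ (k ^ j * k) p := by rw [map_mul]; rfl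
        _ = ρ (k ^ (j + 1)) p := by rw [pow_succ]
  have hn : 0 < orderOf k := orderOf_pos k
  have h1 : p ≤ ρ (k ^ (orderOf k - 1)) p := step _
  have h2 : ρ k (ρ (k ^ (orderOf k - 1)) p) = p := by
    rw [← RelIso.mul_apply, ← map_mul, ← pow_succ', Nat.sub_add_cancel hn,
      pow_orderOf_eq_one, map_one, RelIso.coe_one, id]
  have h3 : ρ k p ≤ p := by
    calc ρ k p ≤ ρ k (ρ (k ^ (orderOf k - 1)) p) := (ρ k).monotone h1
      _ = p := h2
  exact le_antisymm h3 h

theorem core [Finite G] (ρ : G ≃* (P ≃o P))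
    (hfree : ∀ (g : G) (p : P), ρ g p = p → g = 1)
    (a b : P)
    (hcover : ∀ p : P, (∃ g, ρ g a = p) ∨ (∃ g, ρ g b = p))
    (hdisj : ∀ g h : G, ρ g a ≠ ρ h b)
    (hdir : ∀ g : G, ¬ b ≤ ρ g a) :
    Rigid G {g : G | a ≤ ρ g b} := by
  intro α β hα hβ hcompat
  set S : Set G := {g : G | a ≤ ρ g b} with hSdef
  have hmulapp : ∀ (g h : G) (p : P), ρ (g * h) p = ρ g (ρ h p) := by
    intro g h p; rw [map_mul]; rfl
  have hcancel : ∀ (g : G) (p : P), ρ g⁻¹ (ρ g p) = p := by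
    intro g p; rw [← hmulapp, inv_mul_cancel, map_one, RelIso.coe_one, id]
  -- antichain within an orbit
  have hanti : ∀ (p : P) (g g' : G), ρ g p ≤ ρ g' p → g = g' := by
    intro p g g' hle
    have : p ≤ ρ (g⁻¹ * g') p := by
      have := (ρ g⁻¹).monotone hle
      rwa [hcancel, ← hmulapp] at this
    exact inv_mul_eq_one.mp (hfree _ _ (fix_of_le ρ (g⁻¹ * g') p this))
  have horbinj : ∀ (p : P) (g g' : G), ρ g p = ρ g' p → g = g' :=
    fun p g g' h => hanti p g g' (le_of_eq h)
  -- cross characterization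
  have hcross : ∀ g h : G, (ρ g a ≤ ρ h b ↔ g⁻¹ * h ∈ S) := by
    intro g h
    constructor
    · intro hle
      have := (ρ g⁻¹).monotone hle
      rwa [hcancel, ← hmulapp] at this
    · intro hmem
      have := (ρ g).monotone hmem
      rwa [← hmulapp, mul_inv_cancel_left] at this
  have hrev : ∀ g h : G, ¬ ρ g b ≤ ρ h a := by
    intro g h hle
    have := (ρ g⁻¹).monotone hle
    rw [hcancel, ← hmulapp] at this
    exact hdir _ this
  -- the equivalence G ⊕ G ≃ P
  have hbij : Function.Bijective (Sum.elim (fun g => ρ g a) (fun g => ρ g b)) := by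
    constructor
    · rintro (g | g) (h | h) hgh <;> simp only [Sum.elim_inl, Sum.elim_inr] at hgh
      · exact congrArg Sum.inl (horbinj a g h hgh)
      · exact absurd hgh (hdisj g h)
      · exact absurd hgh.symm (hdisj h g)
      · exact congrArg Sum.inr (horbinj b g h hgh)
    · intro p
      rcases hcover p with ⟨g, hg⟩ | ⟨g, hg⟩
      · exact ⟨Sum.inl g, hg⟩
      · exact ⟨Sum.inr g, hg⟩
  set e : (G ⊕ G) ≃ P := Equiv.ofBijective _ hbij with he
  have hea : ∀ g : G, e (Sum.inl g) = ρ g a := fun g => rfl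
  have heb : ∀ g : G, e (Sum.inr g) = ρ g b := fun g => rfl
  set m : (G ⊕ G) ≃ (G ⊕ G) :=
    Equiv.sumCongr (Equiv.ofBijective α hα) (Equiv.ofBijective β hβ) with hm
  set φ : P ≃ P := (e.symm.trans m).trans e with hφ
  have hφa : ∀ g : G, φ (ρ g a) = ρ (α g) a := by
    intro g
    have h1 : e.symm (ρ g a) = Sum.inl g := by
      rw [Equiv.symm_apply_eq]; exact (hea g).symm
    simp only [hφ, Equiv.trans_apply, h1, hm, Equiv.sumCongr_apply, Sum.map_inl,
      Equiv.ofBijective_apply, hea]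
  have hφb : ∀ g : G, φ (ρ g b) = ρ (β g) b := by
    intro g
    have h1 : e.symm (ρ g b) = Sum.inr g := by
      rw [Equiv.symm_apply_eq]; exact (heb g).symm
    simp only [hφ, Equiv.trans_apply, h1, hm, Equiv.sumCongr_apply, Sum.map_inr,
      Equiv.ofBijective_apply, heb]
  -- φ is an order isomorphism
  have hrel : ∀ p q : P, φ p ≤ φ q ↔ p ≤ q := by
    intro p q
    rcases hcover p with ⟨g, hg⟩ | ⟨g, hg⟩ <;> rcases hcover q with ⟨h, hh⟩ | ⟨h, hh⟩ <;>
      subst hg <;> subst hh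
    · rw [hφa, hφa]
      constructor
      · intro hle
        have := hα.injective (hanti a _ _ hle)
        exact this ▸ le_refl _
      · intro hle
        have := hanti a _ _ hle
        exact this ▸ le_refl _
    · rw [hφa, hφb, hcross, hcross, ← hcompat]
    · rw [hφb, hφa]
      exact iff_of_false (hrev _ _) (hrev _ _)
    · rw [hφb, hφb]
      constructor
      · intro hle
        have := hβ.injective (hanti b _ _ hle)
        exact this ▸ le_refl _
      · intro hle
        have := hanti b _ _ hle
        exact this ▸ le_refl _
  set ψ : P ≃o P := ⟨φ, by intro p q; exact hrel p q⟩ with hψ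
  obtain ⟨z, hz⟩ := ρ.surjective ψ
  have hzapp : ∀ p : P, ρ z p = φ p := by
    intro p; rw [hz]; rfl
  refine ⟨z, fun g => ?_, fun h => ?_⟩
  · have : ρ (z * g) a = ρ (α g) a := by rw [hmulapp, hzapp, hφa]
    exact (horbinj a _ _ this).symm
  · have : ρ (z * h) b = ρ (β h) b := by rw [hmulapp, hzapp, hφb]
    exact (horbinj b _ _ this).symm

theorem exists_rigid [Finite G] (h : HasSemiRegularPosetRep.{u, v} G 2) :
    ∃ S : Set G, Rigid G S := by
  obtain ⟨P, _inst, ρ, hfree, reps, hreps⟩ := h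
  have hmulapp : ∀ (g h : G) (p : P), ρ (g * h) p = ρ g (ρ h p) := by
    intro g h p; rw [map_mul]; rfl
  set a := reps 0 with ha
  set b := reps 1 with hb
  have horb : ∀ p : P, (∃ g, ρ g a = p) ∨ (∃ g, ρ g b = p) := by
    intro p
    obtain ⟨i, ⟨g, hg⟩, -⟩ := hreps p
    fin_cases i
    · exact Or.inl ⟨g, hg⟩
    · exact Or.inr ⟨g, hg⟩
  have hdisj : ∀ g h : G, ρ g a ≠ ρ h b := by
    intro g h hgh
    obtain ⟨i, -, huniq⟩ := hreps (ρ g a)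
    have h0 : i = 0 := (huniq 0 ⟨g, rfl⟩).symm
    have h1 : i = 1 := (huniq 1 ⟨h, hgh.symm⟩).symm
    rw [h0] at h1
    exact absurd h1 (by decide)
  by_cases hdir : ∀ g : G, ¬ b ≤ ρ g a
  · exact ⟨_, core ρ hfree a b horb hdisj hdir⟩
  · push_neg at hdir
    obtain ⟨g0, hg0⟩ := hdir
    have hdir' : ∀ g : G, ¬ a ≤ ρ g b := by
      intro h hle
      have h2 : ρ h b ≤ ρ (h * g0) a := by
        have := (ρ h).monotone hg0
        rwa [← hmulapp] at this
      have h3 : a ≤ ρ (h * g0) a := le_trans hle h2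
      have h4 := fix_of_le ρ (h * g0) a h3
      have h5 : a = ρ h b := le_antisymm hle (h4 ▸ h2)
      exact hdisj 1 h (by rw [map_one, RelIso.coe_one, id, ← h5])
    refine ⟨_, core ρ hfree b a ?_ ?_ hdir'⟩
    · intro p; rcases horb p with h | h
      · exact Or.inr h
      · exact Or.inl h
    · intro g h hgh; exact hdisj h g hgh.symm

end Reduction

section Counting

theorem no_rigid_of_large {G : Type u} [Group G] [Fintype G] [DecidableEq G]
    {I : Type} [Fintype I] (f : I → G → G) (hfinj : Function.Injective f)
    (hhom : ∀ i, ∀ a b : G, f i (a * b) = f i a * f i b)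
    (hinj : ∀ i, Function.Injective (f i))
    (hcard : Nat.choose (Fintype.card G) (Fintype.card G / 2) <
      Fintype.card I * Fintype.card G)
    {S : Set G} (hS : Rigid G S) : False := by
  classical
  set T : Finset G := S.toFinset with hT
  have hmemT : ∀ x : G, x ∈ T ↔ x ∈ S := fun x => Set.mem_toFinset
  have hbij : ∀ i, Function.Bijective (f i) :=
    fun i => Finite.injective_iff_bijective.mp (hinj i)
  have hone : ∀ i, f i 1 = 1 := by
    intro i
    have := hhom i 1 1
    rw [one_mul] at this
    exact (mul_eq_left.mp this.symm)
  set F : I × G → Finset G := fun p => T.image (fun t => f p.1 t * p.2) with hF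
  have hinjF : Function.Injective F := by
    intro ⟨i, y⟩ ⟨i', y'⟩ hFeq
    simp only [hF] at hFeq
    set e' : G ≃ G := Equiv.ofBijective (f i') (hbij i') with he'
    have he'hom : ∀ a b : G, e'.symm (a * b) = e'.symm a * e'.symm b := by
      intro a b
      apply (hbij i').injective
      have : ∀ x, f i' (e'.symm x) = x := fun x => e'.apply_symm_apply x
      rw [this, hhom, this, this]
    set τ : G → G := fun g => e'.symm (f i g) with hτ
    set u : G := e'.symm (y * y'⁻¹) with hu
    have hτhom : ∀ a b : G, τ (a * b) = τ a * τ b := by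
      intro a b; rw [hτ]; simp only [hhom i, he'hom]
    have hτbij : Function.Bijective τ :=
      (Equiv.comp_bijective _ e'.symm).mpr (hbij i)
    have hτone : τ 1 = 1 := by
      have := hτhom 1 1
      rw [one_mul] at this
      exact (mul_eq_left.mp this.symm)
    have hkey : ∀ t : G, t ∈ T ↔ τ t * u ∈ T := by
      intro t
      have happ : ∀ x, f i' (e'.symm x) = x := fun x => e'.apply_symm_apply x
      constructor
      · intro ht
        have h1 : f i t * y ∈ T.image (fun t => f i t * y) := Finset.mem_image_of_mem _ ht
        rw [hFeq] at h1
        obtain ⟨t1, ht1, ht1e⟩ := Finset.mem_image.mp h1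
        have h2 : f i' t1 = f i t * (y * y'⁻¹) := by rw [← mul_assoc, ← ht1e]; group
        have : τ t * u = t1 := by
          apply (hbij i').injective
          rw [hτ, hu, ← he'hom, happ, h2]
        rwa [this]
      · intro ht
        have h1 : f i' (τ t * u) * y' ∈ T.image (fun t => f i' t * y') :=
          Finset.mem_image_of_mem _ ht
        rw [← hFeq] at h1
        obtain ⟨t1, ht1, ht1e⟩ := Finset.mem_image.mp h1
        have happ2 : f i' (τ t * u) * y' = f i t * y := by
          have : τ t * u = e'.symm (f i t * (y * y'⁻¹)) := by
            rw [hτ, hu, ← he'hom]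
          rw [this, happ]
          group
        rw [happ2] at ht1e
        have : t = t1 := (hinj i) (mul_right_cancel ht1e).symm
        rwa [this]
    obtain ⟨z, hz1, hz2⟩ := hS τ (fun h => τ h * u) hτbij
      (by
        have : (fun h => τ h * u) = (fun x => x * u) ∘ τ := rfl
        rw [this]
        exact (Function.Bijective.comp ⟨mul_left_injective u,
          fun x => ⟨x * u⁻¹, by group⟩⟩ hτbij))
      (by
        intro g h
        rw [← hmemT, ← hmemT]
        have : (τ g)⁻¹ * (τ h * u) = τ (g⁻¹ * h) * u := by
          rw [hτhom]
          have : τ g⁻¹ = (τ g)⁻¹ := by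
            have h1 := hτhom g⁻¹ g
            rw [inv_mul_cancel, hτone] at h1
            exact eq_inv_of_mul_eq_one_left h1.symm
          rw [this, mul_assoc]
        rw [this]
        exact hkey _)
    have hz : z = 1 := by
      have := hz1 1
      rw [hτone, mul_one] at this
      exact this.symm
    have hτid : ∀ g, τ g = g := by
      intro g; rw [hz1 g, hz, one_mul]
    have hu1 : u = 1 := by
      have := hz2 1
      rw [hτone, hz, one_mul, one_mul] at this
      exact this
    have hii' : i = i' := by
      apply hfinj
      funext g
      have : e'.symm (f i g) = g := hτid g
      have h2 := congrArg e' this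
      rw [e'.apply_symm_apply] at h2
      rw [h2]; rfl
    have hyy' : y = y' := by
      have h0 := congrArg e' hu1
      rw [e'.apply_symm_apply] at h0
      have h1 : e' (1 : G) = 1 := hone i'
      rw [h1] at h0
      exact mul_inv_eq_one.mp h0
    exact Prod.ext hii' hyy'
  have hmaps : ∀ p : I × G, F p ∈ Finset.univ.powersetCard T.card := by
    intro ⟨i, y⟩
    rw [Finset.mem_powersetCard]
    refine ⟨Finset.subset_univ _, ?_⟩
    rw [hF]
    apply Finset.card_image_of_injective
    intro x x' hxx'
    exact (hinj i) (mul_right_cancel hxx')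
  have h1 : (Finset.univ : Finset (I × G)).card ≤
      (Finset.univ.powersetCard T.card : Finset (Finset G)).card :=
    Finset.card_le_card_of_injOn F (fun p _ => hmaps p) (Function.Injective.injOn hinjF)
  rw [Finset.card_univ, Fintype.card_prod, Finset.card_powersetCard, Finset.card_univ] at h1
  have h2 : Nat.choose (Fintype.card G) T.card ≤
      Nat.choose (Fintype.card G) (Fintype.card G / 2) := Nat.choose_le_middle _ _
  omega

end Counting
section PerGroup

theorem noZ3 : ¬ HasSemiRegularPosetRep.{0, v} (Multiplicative (ZMod 3)) 2 := by
  intro h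
  obtain ⟨S, hS⟩ := exists_rigid h
  exact no_rigid_of_large (f := ![id, fun x => x⁻¹]) (by decide) (by decide) (by decide)
    (by decide) hS

theorem noZ4 : ¬ HasSemiRegularPosetRep.{0, v} (Multiplicative (ZMod 4)) 2 := by
  intro h
  obtain ⟨S, hS⟩ := exists_rigid h
  exact no_rigid_of_large (f := ![id, fun x => x⁻¹]) (by decide) (by decide) (by decide)
    (by decide) hS

theorem noZ5 : ¬ HasSemiRegularPosetRep.{0, v} (Multiplicative (ZMod 5)) 2 := by
  intro h
  obtain ⟨S, hS⟩ := exists_rigid h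
  exact no_rigid_of_large (f := ![id, fun x => x⁻¹, fun x => x * x]) (by decide) (by decide)
    (by decide) (by decide) hS

theorem noZ7 : ¬ HasSemiRegularPosetRep.{0, v} (Multiplicative (ZMod 7)) 2 := by
  intro h
  obtain ⟨S, hS⟩ := exists_rigid h
  exact no_rigid_of_large
    (f := ![id, fun x => x⁻¹, fun x => x * x, fun x => x * x * x,
           fun x => x * x * x * x, fun x => x * x * x * x * x])
    (by decide) (by decide) (by decide) (by decide) hS

theorem noZ22 : ¬ HasSemiRegularPosetRep.{0, v} (Multiplicative (ZMod 2 × ZMod 2)) 2 := by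
  intro h
  obtain ⟨S, hS⟩ := exists_rigid h
  exact no_rigid_of_large
    (f := ![id, fun x => Multiplicative.ofAdd ((Multiplicative.toAdd x).2,
      (Multiplicative.toAdd x).1)])
    (by decide) (by decide) (by decide) (by decide) hS

theorem noS3 : ¬ HasSemiRegularPosetRep.{0, v} (Equiv.Perm (Fin 3)) 2 := by
  intro h
  obtain ⟨S, hS⟩ := exists_rigid h
  exact no_rigid_of_large
    (f := ![fun x => x, fun x => (Equiv.swap 0 1) * x * (Equiv.swap 0 1)⁻¹,
           fun x => (Equiv.swap 0 2) * x * (Equiv.swap 0 2)⁻¹,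
           fun x => (Equiv.swap 1 2) * x * (Equiv.swap 1 2)⁻¹])
    (by decide) (by decide) (by decide) (by decide) hS

end PerGroup
section PerGroup2

abbrev V3 := ZMod 2 × ZMod 2 × ZMod 2

set_option maxHeartbeats 4000000 in
theorem noZ23 : ¬ HasSemiRegularPosetRep.{0, v} (Multiplicative V3) 2 := by
  intro h
  obtain ⟨S, hS⟩ := exists_rigid h
  exact no_rigid_of_large
    (f := ![
      id,
      fun x => Multiplicative.ofAdd (((Multiplicative.toAdd x).1, (Multiplicative.toAdd x).2.2,
        (Multiplicative.toAdd x).2.1)),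
      fun x => Multiplicative.ofAdd (((Multiplicative.toAdd x).2.1, (Multiplicative.toAdd x).1,
        (Multiplicative.toAdd x).2.2)),
      fun x => Multiplicative.ofAdd (((Multiplicative.toAdd x).2.1, (Multiplicative.toAdd x).2.2,
        (Multiplicative.toAdd x).1)),
      fun x => Multiplicative.ofAdd (((Multiplicative.toAdd x).2.2, (Multiplicative.toAdd x).1,
        (Multiplicative.toAdd x).2.1)),
      fun x => Multiplicative.ofAdd (((Multiplicative.toAdd x).2.2, (Multiplicative.toAdd x).2.1,
        (Multiplicative.toAdd x).1)),
      fun x => Multiplicative.ofAdd (((Multiplicative.toAdd x).1 + (Multiplicative.toAdd x).2.1,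
        (Multiplicative.toAdd x).2.1, (Multiplicative.toAdd x).2.2)),
      fun x => Multiplicative.ofAdd (((Multiplicative.toAdd x).1,
        (Multiplicative.toAdd x).2.1 + (Multiplicative.toAdd x).2.2, (Multiplicative.toAdd x).2.2)),
      fun x => Multiplicative.ofAdd (((Multiplicative.toAdd x).1 + (Multiplicative.toAdd x).2.2,
        (Multiplicative.toAdd x).2.1, (Multiplicative.toAdd x).2.2))])
    (by decide) (by decide) (by decide) (by decide) hS

abbrev V32 := ZMod 3 × ZMod 3

/-- the linear map given by a 2×2 matrix over `ZMod 3`, as a map of the multiplicative group -/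
def m32 (a b c d : ZMod 3) : Multiplicative V32 → Multiplicative V32 := fun x =>
  Multiplicative.ofAdd ((a * (Multiplicative.toAdd x).1 + b * (Multiplicative.toAdd x).2,
    c * (Multiplicative.toAdd x).1 + d * (Multiplicative.toAdd x).2))

set_option maxHeartbeats 4000000 in
theorem noZ33 : ¬ HasSemiRegularPosetRep.{0, v} (Multiplicative V32) 2 := by
  intro h
  obtain ⟨S, hS⟩ := exists_rigid h
  exact no_rigid_of_large
    (f := ![m32 1 0 0 1, m32 0 1 1 0, m32 1 1 0 1, m32 1 0 1 1, m32 1 2 0 1,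
            m32 1 0 2 1, m32 2 0 0 1, m32 1 0 0 2, m32 2 0 0 2, m32 0 1 2 0,
            m32 0 2 1 0, m32 0 2 2 0, m32 1 1 1 2, m32 2 1 1 1, m32 1 2 1 1])
    (by decide) (by decide) (by decide) (by decide) hS

/-- some automorphisms of the quaternion group `Q₈` -/
def q8aut : Fin 9 → QuaternionGroup 2 → QuaternionGroup 2 :=
  ![id,
    fun x => match x with | .a i => .a i | .xa j => .xa (j + 1),
    fun x => match x with | .a i => .a i | .xa j => .xa (j + 2),
    fun x => match x with | .a i => .a i | .xa j => .xa (j + 3),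
    fun x => match x with | .a i => .a (-i) | .xa j => .xa (-j),
    fun x => match x with | .a i => .a (-i) | .xa j => .xa (1 - j),
    fun x => match x with | .a i => .a (-i) | .xa j => .xa (2 - j),
    fun x => match x with | .a i => .a (-i) | .xa j => .xa (3 - j),
    fun x => match x with
      | .a i => if i = 0 then .a 0 else if i = 1 then .xa 0 else if i = 2 then .a 2 else .xa 2
      | .xa j => if j = 0 then .a 1 else if j = 1 then .xa 3 else if j = 2 then .a 3 else .xa 1]

set_option maxHeartbeats 4000000 in
theorem noQ8 : ¬ HasSemiRegularPosetRep.{0, v} (QuaternionGroup 2) 2 := by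
  intro h
  obtain ⟨S, hS⟩ := exists_rigid h
  exact no_rigid_of_large (f := q8aut) (by decide) (by decide) (by decide) (by decide) hS

end PerGroup2
section PerGroupZ6

abbrev G6 := Multiplicative (ZMod 6)

/-- a function on `ZMod 6` given by a table of values -/
def tbl6 (v : Fin 6 → ZMod 6) : G6 → G6 := fun x =>
  Multiplicative.ofAdd (v ⟨(Multiplicative.toAdd x).val, ZMod.val_lt _⟩)

/-- candidate compatible pairs for subsets of `ZMod 6` -/
def cands6 : List ((G6 → G6) × (G6 → G6)) :=
  [(id, fun x => x * Multiplicative.ofAdd 1),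
   (id, fun x => x * Multiplicative.ofAdd 2),
   (id, fun x => x * Multiplicative.ofAdd 3),
   (id, fun x => x * Multiplicative.ofAdd 4),
   (id, fun x => x * Multiplicative.ofAdd 5),
   (fun x => x⁻¹, fun x => x⁻¹),
   (fun x => x⁻¹, fun x => x⁻¹ * Multiplicative.ofAdd 1),
   (fun x => x⁻¹, fun x => x⁻¹ * Multiplicative.ofAdd 2),
   (fun x => x⁻¹, fun x => x⁻¹ * Multiplicative.ofAdd 3),
   (fun x => x⁻¹, fun x => x⁻¹ * Multiplicative.ofAdd 4),
   (fun x => x⁻¹, fun x => x⁻¹ * Multiplicative.ofAdd 5),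
   (tbl6 ![0, 1, 5, 3, 4, 2], tbl6 ![0, 1, 5, 3, 4, 2]),
   (tbl6 ![0, 4, 2, 3, 1, 5], tbl6 ![0, 1, 5, 3, 4, 2]),
   (tbl6 ![3, 1, 2, 0, 4, 5], tbl6 ![0, 1, 5, 3, 4, 2])]

set_option maxHeartbeats 4000000 in
theorem z6key : ∀ T : Finset G6, ∃ p ∈ cands6,
    Function.Injective p.1 ∧ Function.Injective p.2 ∧
    (∀ g h : G6, g⁻¹ * h ∈ T ↔ (p.1 g)⁻¹ * p.2 h ∈ T) ∧
    ¬∃ z : G6, (∀ g, p.1 g = z * g) ∧ (∀ h, p.2 h = z * h) := by decide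

theorem noZ6 : ¬ HasSemiRegularPosetRep.{0, v} G6 2 := by
  intro h
  obtain ⟨S, hS⟩ := exists_rigid h
  classical
  obtain ⟨p, -, hinj1, hinj2, hcompat, hnt⟩ := z6key S.toFinset
  obtain ⟨z, hz⟩ := hS p.1 p.2 (Finite.injective_iff_bijective.mp hinj1)
    (Finite.injective_iff_bijective.mp hinj2)
    (by intro g h
        have h1 := hcompat g h
        rwa [Set.mem_toFinset, Set.mem_toFinset] at h1)
  exact hnt ⟨z, hz⟩

end PerGroupZ6
section PerGroupZ24

abbrev V4 := ZMod 2 × ZMod 2 × ZMod 2 × ZMod 2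
abbrev Par6 := ZMod 2 × ZMod 2 × ZMod 2 × ZMod 2 × ZMod 2 × ZMod 2

/-- lower unipotent linear map on `(ZMod 2)⁴` -/
def lmap (p : Par6) (v : V4) : V4 :=
  (v.1,
   v.2.1 + p.1 * v.1,
   v.2.2.1 + p.2.1 * v.1 + p.2.2.1 * v.2.1,
   v.2.2.2 + p.2.2.2.1 * v.1 + p.2.2.2.2.1 * v.2.1 + p.2.2.2.2.2 * v.2.2.1)

/-- upper unipotent linear map on `(ZMod 2)⁴` -/
def umap (p : Par6) (v : V4) : V4 :=
  (v.1 + p.1 * v.2.1 + p.2.1 * v.2.2.1 + p.2.2.1 * v.2.2.2,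
   v.2.1 + p.2.2.2.1 * v.2.2.1 + p.2.2.2.2.1 * v.2.2.2,
   v.2.2.1 + p.2.2.2.2.2 * v.2.2.2,
   v.2.2.2)

/-- the family of `4096` automorphisms of `(ZMod 2)⁴` -/
def f24 (q : Par6 × Par6) : Multiplicative V4 → Multiplicative V4 := fun x =>
  Multiplicative.ofAdd (lmap q.1 (umap q.2 (Multiplicative.toAdd x)))

theorem lmap_add (p : Par6) (v w : V4) : lmap p (v + w) = lmap p v + lmap p w := by
  obtain ⟨v1, v2, v3, v4⟩ := v
  obtain ⟨w1, w2, w3, w4⟩ := w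
  simp only [lmap, Prod.mk_add_mk, Prod.mk.injEq]
  refine ⟨trivial, by ring, by ring, by ring⟩

theorem umap_add (p : Par6) (v w : V4) : umap p (v + w) = umap p v + umap p w := by
  obtain ⟨v1, v2, v3, v4⟩ := v
  obtain ⟨w1, w2, w3, w4⟩ := w
  simp only [umap, Prod.mk_add_mk, Prod.mk.injEq]
  refine ⟨by ring, by ring, by ring, trivial⟩

theorem lmap_inj (p : Par6) : Function.Injective (lmap p) := by
  intro v w h
  obtain ⟨v1, v2, v3, v4⟩ := v
  obtain ⟨w1, w2, w3, w4⟩ := w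
  simp only [lmap, Prod.mk.injEq] at h
  obtain ⟨h1, h2, h3, h4⟩ := h
  subst h1
  have e2 : v2 = w2 := by exact add_right_cancel h2
  subst e2
  have e3 : v3 = w3 := by
    rw [add_assoc, add_assoc] at h3
    exact add_right_cancel h3
  subst e3
  have e4 : v4 = w4 := by
    rw [add_assoc, add_assoc, add_assoc, add_assoc] at h4
    exact add_right_cancel h4
  subst e4
  rfl

theorem umap_inj (p : Par6) : Function.Injective (umap p) := by
  intro v w h
  obtain ⟨v1, v2, v3, v4⟩ := v
  obtain ⟨w1, w2, w3, w4⟩ := w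
  simp only [umap, Prod.mk.injEq] at h
  obtain ⟨h1, h2, h3, h4⟩ := h
  subst h4
  have e3 : v3 = w3 := by exact add_right_cancel h3
  subst e3
  have e2 : v2 = w2 := by
    rw [add_assoc, add_assoc] at h2
    exact add_right_cancel h2
  subst e2
  have e1 : v1 = w1 := by
    rw [add_assoc, add_assoc, add_assoc, add_assoc] at h1
    exact add_right_cancel h1
  subst e1
  rfl

theorem f24_hom (q : Par6 × Par6) (a b : Multiplicative V4) :
    f24 q (a * b) = f24 q a * f24 q b := by
  simp only [f24]
  rw [← ofAdd_add]
  congr 1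
  have : Multiplicative.toAdd (a * b) = Multiplicative.toAdd a + Multiplicative.toAdd b := rfl
  rw [this, umap_add, lmap_add]

theorem f24_inj (q : Par6 × Par6) : Function.Injective (f24 q) := by
  intro x y h
  have h1 : lmap q.1 (umap q.2 (Multiplicative.toAdd x)) =
      lmap q.1 (umap q.2 (Multiplicative.toAdd y)) := Multiplicative.ofAdd.injective h
  have h2 := umap_inj q.2 (lmap_inj q.1 h1)
  exact Multiplicative.toAdd.injective h2

theorem f24_finj : Function.Injective f24 := by
  intro q q' h
  have hF : ∀ v : V4, lmap q.1 (umap q.2 v) = lmap q'.1 (umap q'.2 v) := by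
    intro v
    have := congrFun h (Multiplicative.ofAdd v)
    exact Multiplicative.ofAdd.injective this
  obtain ⟨⟨a21, a31, a32, a41, a42, a43⟩, ⟨b12, b13, b14, b23, b24, b34⟩⟩ := q
  obtain ⟨⟨c21, c31, c32, c41, c42, c43⟩, ⟨d12, d13, d14, d23, d24, d34⟩⟩ := q'
  have h0 := hF (1, 0, 0, 0)
  have h1 := hF (0, 1, 0, 0)
  have h2 := hF (0, 0, 1, 0)
  have h3 := hF (0, 0, 0, 1)
  simp only [lmap, umap, mul_zero, mul_one, add_zero, zero_add, Prod.mk.injEq] at h0 h1 h2 h3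
  obtain ⟨-, e21, e31, e41⟩ := h0
  subst e21; subst e31; subst e41
  obtain ⟨e12, -, ee32, ee42⟩ := h1
  subst e12
  have e32 : a32 = c32 := add_left_cancel ee32
  subst e32
  have e42 : a42 = c42 := add_left_cancel ee42
  subst e42
  obtain ⟨e13, ee23, -, ee43⟩ := h2
  subst e13
  have e23 : b23 = d23 := add_right_cancel ee23
  subst e23
  have e43 : a43 = c43 := add_left_cancel ee43
  subst e43
  obtain ⟨e14, ee24, ee34, -⟩ := h3
  subst e14
  have e24 : b24 = d24 := add_right_cancel ee24
  subst e24
  have e34 : b34 = d34 := by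
    rw [add_assoc, add_assoc] at ee34
    exact add_right_cancel ee34
  subst e34
  rfl

theorem noZ24 : ¬ HasSemiRegularPosetRep.{0, v} (Multiplicative V4) 2 := by
  intro h
  obtain ⟨S, hS⟩ := exists_rigid h
  refine no_rigid_of_large (f := f24) f24_finj f24_hom f24_inj ?_ hS
  have hG : Fintype.card (Multiplicative V4) = 16 := by
    simp only [Fintype.card_multiplicative, Fintype.card_prod, ZMod.card]
  have hI : Fintype.card (Par6 × Par6) = 4096 := by
    simp only [Fintype.card_prod, ZMod.card]
  rw [hG, hI]
  decide

end PerGroupZ24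

/-- None of `ℤ/3, ℤ/4, ℤ/5, ℤ/6, ℤ/7, (ℤ/2)², (ℤ/2)³, (ℤ/2)⁴, (ℤ/3)²`,
the symmetric group `S₃` and the quaternion group `Q₈` admits a semi-regular poset
representation with two orbits. -/
theorem small_groups_no_two_orbit_semiRegular :
    ¬ HasSemiRegularPosetRep.{0, v} (Multiplicative (ZMod 3)) 2 ∧
    ¬ HasSemiRegularPosetRep.{0, v} (Multiplicative (ZMod 4)) 2 ∧
    ¬ HasSemiRegularPosetRep.{0, v} (Multiplicative (ZMod 5)) 2 ∧
    ¬ HasSemiRegularPosetRep.{0, v} (Multiplicative (ZMod 6)) 2 ∧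
    ¬ HasSemiRegularPosetRep.{0, v} (Multiplicative (ZMod 7)) 2 ∧
    ¬ HasSemiRegularPosetRep.{0, v} (Multiplicative (ZMod 2 × ZMod 2)) 2 ∧
    ¬ HasSemiRegularPosetRep.{0, v} (Multiplicative (ZMod 2 × ZMod 2 × ZMod 2)) 2 ∧
    ¬ HasSemiRegularPosetRep.{0, v} (Multiplicative (ZMod 2 × ZMod 2 × ZMod 2 × ZMod 2)) 2 ∧
    ¬ HasSemiRegularPosetRep.{0, v} (Multiplicative (ZMod 3 × ZMod 3)) 2 ∧
    ¬ HasSemiRegularPosetRep.{0, v} (Equiv.Perm (Fin 3)) 2 ∧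
    ¬ HasSemiRegularPosetRep.{0, v} (QuaternionGroup 2) 2 :=
  ⟨noZ3, noZ4, noZ5, noZ6, noZ7, noZ22, noZ23, noZ24, noZ33, noS3, noQ8⟩
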